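/- With the construction above and α_1 + α_2 + α_3 = 0, for every decomposable tensor x = u⊗v⊗w ∈ V^{⊗3} one has [[x,x],x] = 0, and consequently [[x,x],x] = 0 for every x ∈ V^{⊗3}; thus (sl_2^{⊕3}) ⊕ V^{⊗3} is a Lie superalgebra. -/
import Mathlib


/-!
STATEMENT 13: With the construction of D(2,1;α) (Statement 12) and
`α₁ + α₂ + α₃ = 0`, for every decomposable tensor `x = u⊗v⊗w ∈ V^{⊗3}` one has
`[[x,x],x] = 0`, and consequently `[[x,x],x] = 0` for every `x ∈ V^{⊗3}`; thus
`sl₂^{⊕3} ⊕ V^{⊗3}` is a Lie superalgebra.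
-/

namespace Stmt13

variable (k : Type*) [Field k]

/-- The matrix of the skew form. -/
def J : Matrix (Fin 2) (Fin 2) k := !![0, 1; -1, 0]

/-- The three-fold tensor cube of `V`, via coefficient arrays. -/
abbrev W (k : Type*) := Fin 2 → Fin 2 → Fin 2 → k

/-- First component of the bracket: bilinear extension of
`(u⊗v⊗w, u'⊗v'⊗w') ↦ ⟨v,v'⟩⟨w,w'⟩ · uu'` (with `uu' = (1/2)(u u'ᵀ + u' uᵀ)`). -/
def comp1 (x y : W k) : Matrix (Fin 2) (Fin 2) k :=
  Matrix.of fun a b => (1 / 2) *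
    ∑ j, ∑ j', ∑ l, ∑ l',
      J k j j' * J k l l' * (x a j l * y b j' l' + x b j l * y a j' l')

/-- Second component: the form on factors 1 and 3, `vv'` from factor 2. -/
def comp2 (x y : W k) : Matrix (Fin 2) (Fin 2) k :=
  Matrix.of fun a b => (1 / 2) *
    ∑ i, ∑ i', ∑ l, ∑ l',
      J k i i' * J k l l' * (x i a l * y i' b l' + x i b l * y i' a l')

/-- Third component: the form on factors 1 and 2, `ww'` from factor 3. -/
def comp3 (x y : W k) : Matrix (Fin 2) (Fin 2) k :=
  Matrix.of fun a b => (1 / 2) *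
    ∑ i, ∑ i', ∑ j, ∑ j',
      J k i i' * J k j j' * (x i j a * y i' j' b + x i j b * y i' j' a)

/-- The bracket `W × W → sl₂^{⊕3}`. -/
def br (α₁ α₂ α₃ : k) (x y : W k) :
    Matrix (Fin 2) (Fin 2) k × Matrix (Fin 2) (Fin 2) k × Matrix (Fin 2) (Fin 2) k :=
  (α₁ • comp1 k x y, α₂ • comp2 k x y, α₃ • comp3 k x y)

/-- The factor-wise action of `sl₂^{⊕3}` on `W`, each copy of `Sym²(V)` acting
by `w ↦ S J w` on its tensor factor. -/
def actg (S : Matrix (Fin 2) (Fin 2) k × Matrix (Fin 2) (Fin 2) k ×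
    Matrix (Fin 2) (Fin 2) k) (x : W k) : W k :=
  fun i j l =>
    (∑ a, (S.1 * J k) i a * x a j l) + (∑ a, (S.2.1 * J k) j a * x i a l) +
      (∑ a, (S.2.2 * J k) l a * x i j a)

/-- The decomposable tensor `u ⊗ v ⊗ w`. -/
def dec (u v w : Fin 2 → k) : W k := fun i j l => u i * v j * w l

end Stmt13

set_option maxHeartbeats 4000000 in
open Stmt13 in
theorem stmt13 (k : Type*) [Field k] (hk : ringChar k ≠ 2) (α₁ α₂ α₃ : k)
    (hsum : α₁ + α₂ + α₃ = 0) :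
    (∀ u v w : Fin 2 → k,
      actg k (br k α₁ α₂ α₃ (dec k u v w) (dec k u v w)) (dec k u v w) = 0) ∧
    (∀ x : W k, actg k (br k α₁ α₂ α₃ x x) x = 0) := by
  have h3 : α₃ = -α₁ - α₂ := by linear_combination hsum
  subst h3
  have hgen : ∀ x : W k, actg k (br k α₁ α₂ (-α₁ - α₂) x x) x = 0 := by
    intro x
    funext i j l
    fin_cases i <;> fin_cases j <;> fin_cases l <;>
      simp only [actg, br, comp1, comp2, comp3, J, Matrix.mul_apply,
        Fin.sum_univ_two, Matrix.smul_apply, Matrix.of_apply, smul_eq_mul,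
        Matrix.cons_val', Matrix.cons_val_zero, Matrix.cons_val_one,
        Matrix.head_cons, Matrix.empty_val', Matrix.cons_val_fin_one,
        Matrix.head_fin_const, Pi.zero_apply, Fin.mk_zero, Fin.mk_one] <;> ring
  exact ⟨fun u v w => hgen _, hgen⟩
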